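/- In an image-finite Kripke labeled transition system, modal equivalence transfers along transitions: if states s and t satisfy exactly the same KT formulas and (s,a,s') ∈ T, then there exists t' with (t,a,t') ∈ T such that s' and t' satisfy exactly the same KT formulas. -/

import Mathlib

/-- Epistemic formulas: ψ ::= ⊤ | p | ¬ψ | ψ∧ψ | K_i ψ -/
inductive EForm (At A : Type) : Type
  | top : EForm At A
  | atom : At → EForm At A
  | neg : EForm At A → EForm At A
  | conj : EForm At A → EForm At A → EForm At A
  | know : A → EForm At A → EForm At A

/-- KT formulas: φ ::= ⊤ | p | ¬φ | φ∧φ | ⟨π⟩φ | ψ -/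
inductive KTForm (At A Act : Type) : Type
  | top : KTForm At A Act
  | atom : At → KTForm At A Act
  | neg : KTForm At A Act → KTForm At A Act
  | conj : KTForm At A Act → KTForm At A Act → KTForm At A Act
  | dia : Act → KTForm At A Act → KTForm At A Act
  | epi : EForm At A → KTForm At A Act

/-- Epistemic satisfaction of ψ at a world `X : Set At` w.r.t. a family `R` of
relations on `Set At` (identity valuation: `p` holds at `X` iff `p ∈ X`). -/
def esat {At A : Type} (R : A → Set At → Set At → Prop) :
    Set At → EForm At A → Prop
  | _, .top => True
  | X, .atom p => p ∈ X
  | X, .neg ψ => ¬ esat R X ψ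
  | X, .conj ψ₁ ψ₂ => esat R X ψ₁ ∧ esat R X ψ₂
  | X, .know i ψ => ∀ Y, R i X Y → esat R Y ψ

/-- A Kripke labeled transition system over atomic propositions `At`,
agents `A`, actions `Act`, and states `S`. -/
structure KLTS (At A Act S : Type) : Type where
  T : S → Act → S → Prop
  r : A → S → Set At → Set At → Prop
  v : S → Set At

/-- KT satisfaction `M,s ⊨ φ`. -/
def KLTS.sat {At A Act S : Type} (M : KLTS At A Act S) :
    S → KTForm At A Act → Prop
  | _, .top => True
  | s, .atom p => p ∈ M.v s
  | s, .neg φ => ¬ M.sat s φ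
  | s, .conj φ₁ φ₂ => M.sat s φ₁ ∧ M.sat s φ₂
  | s, .dia π φ => ∃ s', M.T s π s' ∧ M.sat s' φ
  | s, .epi ψ => esat (fun i => M.r i s) (M.v s) ψ

/-- Modal equivalence: `s` and `t` satisfy exactly the same KT formulas. -/
def KLTS.ModEquiv {At A Act S : Type} (M : KLTS At A Act S) (s t : S) : Prop :=
  ∀ φ : KTForm At A Act, M.sat s φ ↔ M.sat t φ

/-- A bisimulation on `M`. -/
def KLTS.IsBisimulation {At A Act S : Type} (M : KLTS At A Act S)
    (B : S → S → Prop) : Prop :=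
  Equivalence B ∧
  ∀ s t, B s t →
    (M.v s = M.v t) ∧
    (∀ a s', M.T s a s' → ∃ t', M.T t a t' ∧ B s' t') ∧
    (∃ 𝓑 : Set At → Set At → Prop, Equivalence 𝓑 ∧ 𝓑 (M.v s) (M.v t) ∧
      ∀ X Y, 𝓑 X Y → X = Y ∧
        ∀ i X', M.r i s X X' → ∃ Y', M.r i t Y Y' ∧ 𝓑 X' Y')

/-- `s ∼ t`: some bisimulation relates `s` and `t`. -/
def KLTS.Bisimilar {At A Act S : Type} (M : KLTS At A Act S) (s t : S) : Prop :=
  ∃ B, M.IsBisimulation B ∧ B s t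

/-- Image finiteness of a KLTS. -/
def KLTS.ImageFinite {At A Act S : Type} (M : KLTS At A Act S) : Prop :=
  (∀ s a, {s' | M.T s a s'}.Finite) ∧
  (∀ s i X, {Y | M.r i s X Y}.Finite)


/-- Finite conjunction of KT formulas. -/
def bigConj {At A Act : Type} (L : List (KTForm At A Act)) : KTForm At A Act :=
  L.foldr KTForm.conj .top

lemma sat_bigConj {At A Act S : Type} (M : KLTS At A Act S) (x : S)
    (L : List (KTForm At A Act)) :
    M.sat x (bigConj L) ↔ ∀ φ ∈ L, M.sat x φ := by
  induction L with
  | nil => simp [bigConj, KLTS.sat]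
  | cons φ L ih =>
    simp only [bigConj, List.foldr] at *
    constructor
    · rintro ⟨h1, h2⟩ ψ hψ
      rcases List.mem_cons.mp hψ with rfl | h
      · exact h1
      · exact ih.mp h2 _ h
    · intro h
      exact ⟨h _ List.mem_cons_self, ih.mpr fun ψ hψ => h _ (List.mem_cons_of_mem _ hψ)⟩

lemma not_modEquiv_dist {At A Act S : Type} (M : KLTS At A Act S) (x y : S)
    (h : ¬ M.ModEquiv x y) : ∃ φ, M.sat x φ ∧ ¬ M.sat y φ := by
  simp only [KLTS.ModEquiv, not_forall] at h
  obtain ⟨φ, hφ⟩ := h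
  by_cases hx : M.sat x φ
  · exact ⟨φ, hx, fun hy => hφ ⟨fun _ => hy, fun _ => hx⟩⟩
  · refine ⟨.neg φ, hx, ?_⟩
    intro hy
    exact hy (by tauto)

/-- In an image-finite KLTS, modal equivalence transfers along transitions. -/
theorem modEquiv_transfer {At A Act S : Type} [Nonempty S]
    (M : KLTS At A Act S) (hfin : M.ImageFinite) (s t s' : S) (a : Act)
    (heq : M.ModEquiv s t) (hT : M.T s a s') :
    ∃ t', M.T t a t' ∧ M.ModEquiv s' t' := by
  by_contra hcon
  push_neg at hcon
  classical
  have hdist : ∀ t', M.T t a t' → ∃ φ, M.sat s' φ ∧ ¬ M.sat t' φ := fun t' h =>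
    not_modEquiv_dist M s' t' (hcon t' h)
  set f : S → KTForm At A Act := fun t' =>
    if h : M.T t a t' then (hdist t' h).choose else .top with hf
  have hf1 : ∀ t', M.T t a t' → M.sat s' (f t') ∧ ¬ M.sat t' (f t') := by
    intro t' h
    simp only [hf, dif_pos h]
    exact ⟨(hdist t' h).choose_spec.1, (hdist t' h).choose_spec.2⟩
  set Fs := (hfin.1 t a).toFinset with hFs
  set L := Fs.toList.map f with hL
  have hsats : M.sat s (.dia a (bigConj L)) := by
    refine ⟨s', hT, (sat_bigConj M s' L).mpr ?_⟩
    intro φ hφ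
    obtain ⟨t', ht', rfl⟩ := List.mem_map.mp hφ
    have : M.T t a t' := by
      have := Finset.mem_toList.mp ht'
      rwa [hFs, Set.Finite.mem_toFinset] at this
    exact (hf1 t' this).1
  have hsatt : M.sat t (.dia a (bigConj L)) := (heq _).mp hsats
  obtain ⟨t'', hT'', hsat''⟩ := hsatt
  have hmem : f t'' ∈ L := by
    apply List.mem_map.mpr
    exact ⟨t'', Finset.mem_toList.mpr ((Set.Finite.mem_toFinset _).mpr hT''), rfl⟩
  exact (hf1 t'' hT'').2 ((sat_bigConj M t'' L).mp hsat'' _ hmem)
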